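/- Let F be an algebraically closed field of characteristic 0, k ≥ 2 an integer, and B ∈ GL_n(F). Then the map (X₁, X₂) ↦ X₁^k + B·X₂^k is surjective on M_n(F). -/

import Mathlib

open Polynomial

section auxiliary

lemma aux_exists_one_add_pow {A : Type*} [CommRing A] (x : A) :
    ∀ e : ℕ, ∃ c : A, (1 + x) ^ e = 1 + x * c := by
  intro e
  induction e with
  | zero => exact ⟨0, by ring⟩
  | succ e ih =>
    obtain ⟨c, hc⟩ := ih
    exact ⟨1 + c + x * c, by rw [pow_succ, hc]; ring⟩

lemma aux_exists_add_pow_eq {A : Type*} [CommRing A] (u a : A) :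
    ∀ e : ℕ, ∃ c : A, (u + a) ^ (e + 1)
      = u ^ (e + 1) + ((e : A) + 1) * (u ^ e * a) + a ^ 2 * c := by
  intro e
  induction e with
  | zero => exact ⟨0, by ring⟩
  | succ e ih =>
    obtain ⟨c, hc⟩ := ih
    refine ⟨((e : A) + 1) * u ^ e + c * (u + a), ?_⟩
    rw [pow_succ, hc]
    push_cast
    ring

lemma aux_unipotent_root {F : Type*} [Field F] [CharZero F] {A : Type*} [CommRing A] [Algebra F A]
    {k : ℕ} (hk : k ≠ 0) {m : A} (hm : IsNilpotent m) : ∃ u : A, u ^ k = 1 + m := by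
  obtain ⟨K, rfl⟩ : ∃ K, k = K + 1 :=
    ⟨k - 1, (Nat.succ_pred_eq_of_pos (Nat.pos_of_ne_zero hk)).symm⟩
  set k := K + 1
  have hkF : (k : F) ≠ 0 := Nat.cast_ne_zero.mpr hk
  set kinv : A := algebraMap F A ((k : F)⁻¹) with hkinv
  have hkk : ((K : A) + 1) * kinv = 1 := by
    have : ((K : A) + 1) = algebraMap F A (k : F) := by
      push_cast [map_natCast]
      simp only [k]; push_cast; ring
    rw [this, hkinv, ← map_mul, mul_inv_cancel₀ hkF, map_one]
  have claim : ∀ j : ℕ, ∃ u t s : A, u ^ k = 1 + m + m ^ (j + 1) * t ∧ u = 1 + m * s := by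
    intro j
    induction j with
    | zero => exact ⟨1, -1, 0, by ring, by ring⟩
    | succ j ih =>
      obtain ⟨u, t, s, hu, hus⟩ := ih
      set a : A := -(kinv * (m ^ (j + 1) * t)) with ha
      obtain ⟨c, hc⟩ := aux_exists_add_pow_eq u a K
      obtain ⟨c₂, hc₂⟩ := aux_exists_one_add_pow (m * s) K
      refine ⟨u + a, -(s * c₂ * t) + kinv * kinv * (m ^ j * (t * t)) * c,
        s + -(kinv * (m ^ j * t)), ?_, ?_⟩
      · rw [hc, hu, hus, hc₂, ha]
        linear_combination (-(1 + m * s * c₂) * (m ^ (j + 1) * t)) * hkk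
      · rw [hus, ha]
        ring
  obtain ⟨d, hd⟩ := hm
  obtain ⟨u, t, s, hu, -⟩ := claim d
  refine ⟨u, by rw [hu, pow_succ, hd]; ring⟩

lemma aux_unipotent_root_poly {F : Type*} [Field F] [CharZero F] {k : ℕ} (hk : k ≠ 0) (d : ℕ) :
    ∃ P : F[X], (X : F[X]) ^ d ∣ P ^ k - (1 + X) := by
  set I : Ideal F[X] := Ideal.span {(X : F[X]) ^ d} with hI
  have hnil : IsNilpotent (Ideal.Quotient.mk I (X : F[X])) := by
    refine ⟨d, ?_⟩
    rw [← map_pow, Ideal.Quotient.eq_zero_iff_mem, hI]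
    exact Ideal.subset_span rfl
  obtain ⟨u, hu⟩ := aux_unipotent_root (F := F) hk hnil
  obtain ⟨P, rfl⟩ := Ideal.Quotient.mk_surjective u
  refine ⟨P, ?_⟩
  rw [← Ideal.mem_span_singleton, ← hI, ← Ideal.Quotient.eq_zero_iff_mem]
  rw [map_sub, map_pow, hu, map_add, map_one]
  ring

lemma aux_unipotent_root' {F A : Type*} [Field F] [CharZero F] [Ring A] [Algebra F A]
    {k : ℕ} (hk : k ≠ 0) {m : A} (hm : IsNilpotent m) :
    ∃ P : F[X], (aeval m P) ^ k = 1 + m := by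
  obtain ⟨d, hd⟩ := hm
  obtain ⟨P, c, hPc⟩ := aux_unipotent_root_poly (F := F) hk d
  refine ⟨P, ?_⟩
  have h := congrArg (aeval m) hPc
  rw [map_mul, map_pow, aeval_X, hd, zero_mul, map_sub, map_pow, map_add, map_one, aeval_X] at h
  have := sub_eq_zero.mp h
  exact this

lemma aux_exists_aeval_inverse {F A : Type*} [Field F] [Ring A] [Algebra F A] {a : A} {p : F[X]}
    (hp : aeval a p = 0) {x : F} (hx : p.eval x ≠ 0) :
    ∃ b : F[X], aeval a b * (a - algebraMap F A x) = 1 ∧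
      (a - algebraMap F A x) * aeval a b = 1 := by
  set e := p.eval x with he
  set q := p /ₘ (X - C x) with hq
  have hmd : C e + (X - C x) * q = p := by
    rw [he, ← modByMonic_X_sub_C_eq_C_eval]
    exact modByMonic_add_div p (X - C x)
  have h1 : algebraMap F A e + (a - algebraMap F A x) * aeval a q = 0 := by
    have h := congrArg (aeval a) hmd
    simpa [hp] using h
  have h2 : algebraMap F A e + aeval a q * (a - algebraMap F A x) = 0 := by
    rw [mul_comm (X - C x) q] at hmd
    have h := congrArg (aeval a) hmd
    simpa [hp] using h
  set w := aeval a q with hw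
  have hwx2 : w * (a - algebraMap F A x) = -(algebraMap F A e) :=
    (neg_eq_of_add_eq_zero_right h2).symm
  have hwx1 : (a - algebraMap F A x) * w = -(algebraMap F A e) :=
    (neg_eq_of_add_eq_zero_right h1).symm
  have hb : aeval a (C (-e⁻¹) * q) = algebraMap F A (-e⁻¹) * w := by simp [hw]
  have hcancel : algebraMap F A (-e⁻¹) * -(algebraMap F A e) = 1 := by
    rw [← map_neg, ← map_mul, neg_mul_neg, inv_mul_cancel₀ hx, map_one]
  refine ⟨C (-e⁻¹) * q, ?_, ?_⟩
  · rw [hb, mul_assoc, hwx2, hcancel]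
  · rw [hb, ← mul_assoc, ← Algebra.commutes, mul_assoc, hwx1, hcancel]

lemma aux_semisimple_pow_root {F V : Type*} [Field F] [IsAlgClosed F] [CharZero F]
    [AddCommGroup V] [Module F V] [FiniteDimensional F V]
    {s : Module.End F V} (hss : s.IsSemisimple) {k : ℕ} (hk : 0 < k) :
    ∃ p : F[X], (aeval s p) ^ k = s := by
  classical
  have hint : IsIntegral F s := Algebra.IsIntegral.isIntegral s
  set m := minpoly F s with hm
  have hmonic : m.Monic := minpoly.monic hint
  have hm0 : m ≠ 0 := hmonic.ne_zero
  have hsq : Squarefree m := hss.minpoly_squarefree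
  have hsep : m.Separable := PerfectField.separable_iff_squarefree.mpr hsq
  have hnodup : m.roots.Nodup := nodup_roots hsep
  have hprod : m = (m.roots.map fun a => X - C a).prod :=
    (IsAlgClosed.splits m).eq_prod_roots_of_monic hmonic
  have hroot : ∀ l : F, ∃ z : F, z ^ k = l := fun l => IsAlgClosed.exists_pow_nat_eq l hk
  choose v hv using hroot
  set p := Lagrange.interpolate m.roots.toFinset id v with hp
  have heval : ∀ l ∈ m.roots.toFinset, p.eval l = v l := by
    intro l hl
    exact Lagrange.eval_interpolate_at_node v (Set.injOn_id _) hl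
  set q : F[X] := p ^ k - X with hqdef
  by_cases hq0 : q = 0
  · refine ⟨p, ?_⟩
    have hpk : p ^ k = X := by rwa [sub_eq_zero] at hq0
    rw [← map_pow, hpk, aeval_X]
  · have hdvd : m ∣ q := by
      rw [hprod]
      refine (Multiset.prod_X_sub_C_dvd_iff_le_roots hq0 m.roots).mpr ?_
      refine Multiset.le_iff_count.mpr fun a => ?_
      by_cases ha : a ∈ m.roots
      · have h1 : m.roots.count a ≤ 1 := Multiset.nodup_iff_count_le_one.mp hnodup a
        have h2 : a ∈ q.roots := by
          rw [mem_roots hq0]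
          have hqa : q.eval a = (v a) ^ k - a := by
            simp [hqdef, heval a (Multiset.mem_toFinset.mpr ha)]
          rw [IsRoot, hqa, hv a, sub_self]
        exact h1.trans (Multiset.one_le_count_iff_mem.mpr h2)
      · simp [Multiset.count_eq_zero_of_notMem ha]
    obtain ⟨c, hc⟩ := hdvd
    have hz : aeval s q = 0 := by rw [hc, map_mul, hm, minpoly.aeval, zero_mul]
    refine ⟨p, ?_⟩
    rw [hqdef, map_sub, map_pow, aeval_X, sub_eq_zero] at hz
    exact hz

lemma aux_end_pow_root {F V : Type*} [Field F] [IsAlgClosed F] [CharZero F]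
    [AddCommGroup V] [Module F V] [FiniteDimensional F V]
    (f : Module.End F V) (hf : IsUnit f) {k : ℕ} (hk : k ≠ 0) :
    ∃ g : Module.End F V, g ^ k = f := by
  classical
  obtain ⟨n, hn_mem, s, hs_mem, hn_nil, hs_ss, hfns⟩ :=
    Module.End.exists_isNilpotent_isSemisimple (f := f)
  have hAcomm : ∀ x ∈ Algebra.adjoin F {f}, ∀ y ∈ Algebra.adjoin F {f}, Commute x y := by
    intro x hx y hy
    refine Algebra.commute_of_mem_adjoin_of_forall_mem_commute hy ?_
    rintro z rfl
    exact (Algebra.commute_of_mem_adjoin_self hx).symm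
  -- s is a unit
  have hcommfn : Commute f n := Algebra.commute_of_mem_adjoin_self hn_mem
  have hfi : f * ↑hf.unit⁻¹ = 1 := hf.mul_val_inv
  have hcomm_fi_n : Commute (↑hf.unit⁻¹ : Module.End F V) n := by
    have h1 : Commute (↑hf.unit : Module.End F V) n := by rwa [IsUnit.unit_spec]
    exact h1.units_inv_left
  have hnil2 : IsNilpotent ((↑hf.unit⁻¹ : Module.End F V) * n) :=
    hcomm_fi_n.isNilpotent_mul_left hn_nil
  have hs_eq : s = f * (1 - (↑hf.unit⁻¹ : Module.End F V) * n) := by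
    rw [mul_sub, mul_one, ← mul_assoc, hfi, one_mul, hfns, add_sub_cancel_left]
  have hs_unit : IsUnit s := by
    rw [hs_eq]; exact hf.mul hnil2.isUnit_one_sub
  -- minpoly of s has nonzero constant coefficient
  have he0 : (minpoly F s).eval 0 ≠ 0 := by
    intro h
    have hev : Module.End.HasEigenvalue s 0 := Module.End.hasEigenvalue_of_isRoot h
    obtain ⟨v, hv⟩ := hev.exists_hasEigenvector
    have hsv : s v = 0 := by simpa using hv.apply_eq_smul
    have hker : LinearMap.ker s = ⊥ := (LinearMap.isUnit_iff_ker_eq_bot s).mp hs_unit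
    exact hv.right (by rwa [← LinearMap.mem_ker, hker, Submodule.mem_bot] at hsv)
  obtain ⟨b, hb1, hb2⟩ := aux_exists_aeval_inverse (minpoly.aeval F s) he0
  rw [map_zero, sub_zero] at hb1 hb2
  obtain ⟨pr, hpr⟩ := aux_semisimple_pow_root hs_ss (Nat.pos_of_ne_zero hk)
  -- memberships in the (commutative) adjoin of f
  have hsub : Algebra.adjoin F {s} ≤ Algebra.adjoin F {f} :=
    Algebra.adjoin_le (Set.singleton_subset_iff.mpr hs_mem)
  have hbA : aeval s b ∈ Algebra.adjoin F {f} := hsub (Polynomial.aeval_mem_adjoin_singleton F s)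
  have hrA : aeval s pr ∈ Algebra.adjoin F {f} := hsub (Polynomial.aeval_mem_adjoin_singleton F s)
  set si := aeval s b with hsi
  set r := aeval s pr with hr
  set t := si * n with ht
  have htA : t ∈ Algebra.adjoin F {f} := mul_mem hbA hn_mem
  have htnil : IsNilpotent t := by
    obtain ⟨j, hj⟩ := hn_nil
    refine ⟨j, ?_⟩
    rw [ht, (hAcomm si hbA n hn_mem).mul_pow, hj, mul_zero]
  obtain ⟨P, hP⟩ := aux_unipotent_root' (F := F) hk htnil
  set u := aeval t P with hu
  have huA : u ∈ Algebra.adjoin F {f} :=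
    (Algebra.adjoin_le (Set.singleton_subset_iff.mpr htA) : Algebra.adjoin F {t} ≤ _)
      (Polynomial.aeval_mem_adjoin_singleton F t)
  refine ⟨r * u, ?_⟩
  rw [(hAcomm r hrA u huA).mul_pow, hpr, hP, mul_add, mul_one, ← mul_assoc, hb2, one_mul, hfns,
    add_comm]

lemma aux_matrix_pow_root {F : Type*} [Field F] [IsAlgClosed F] [CharZero F] {n : ℕ}
    (M : Matrix (Fin n) (Fin n) F) (hM : IsUnit M) {k : ℕ} (hk : k ≠ 0) :
    ∃ X : Matrix (Fin n) (Fin n) F, X ^ k = M := by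
  set e := Matrix.toLinAlgEquiv' (R := F) (n := Fin n)
  have hM' : IsUnit (e M) := hM.map e
  obtain ⟨g, hg⟩ := aux_end_pow_root (e M) hM' hk
  refine ⟨e.symm g, ?_⟩
  rw [← map_pow, hg, AlgEquiv.symm_apply_apply]

end auxiliary

/-- For `B` invertible and `k ≥ 2`, the map `(X₁, X₂) ↦ X₁^k + B * X₂^k` is
surjective on `M_n(F)`. -/
theorem stmt_2 {F : Type*} [Field F] [IsAlgClosed F] [CharZero F] {n : ℕ}
    (B : Matrix (Fin n) (Fin n) F) (hB : IsUnit B) (k : ℕ) (hk : 2 ≤ k) :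
    ∀ C : Matrix (Fin n) (Fin n) F,
      ∃ X₁ X₂ : Matrix (Fin n) (Fin n) F, C = X₁ ^ k + B * X₂ ^ k := by
  intro C
  have hk0 : k ≠ 0 := by omega
  classical
  have hint : IsIntegral F C := Algebra.IsIntegral.isIntegral C
  have hm0 : minpoly F C ≠ 0 := (minpoly.monic hint).ne_zero
  have hfin : Set.Finite {x : F | (minpoly F C).IsRoot x} := Polynomial.finite_setOf_isRoot hm0
  obtain ⟨a, ha⟩ := hfin.infinite_compl.nonempty
  have ha' : (minpoly F C).eval a ≠ 0 := ha
  obtain ⟨bb, hb1, hb2⟩ := aux_exists_aeval_inverse (minpoly.aeval F C) ha'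
  have hMu : IsUnit (C - algebraMap F (Matrix (Fin n) (Fin n) F) a) :=
    ⟨⟨C - algebraMap F (Matrix (Fin n) (Fin n) F) a, aeval C bb, hb2, hb1⟩, rfl⟩
  set M := C - algebraMap F (Matrix (Fin n) (Fin n) F) a with hMdef
  obtain ⟨c, hc⟩ := IsAlgClosed.exists_pow_nat_eq a (Nat.pos_of_ne_zero hk0)
  have hBM : IsUnit ((↑hB.unit⁻¹ : Matrix (Fin n) (Fin n) F) * M) := (hB.unit⁻¹).isUnit.mul hMu
  obtain ⟨X₂, hX₂⟩ := aux_matrix_pow_root _ hBM hk0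
  refine ⟨algebraMap F _ c, X₂, ?_⟩
  rw [hX₂, ← map_pow, hc, ← mul_assoc, hB.mul_val_inv, one_mul, hMdef]
  abel
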